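/- The image of ι_L : D(L) → S(h_L) generates S(h_L) as a Heyting algebra: every element of S(h_L) lies in the smallest sub-Heyting-algebra of S(h_L) containing all ι_L(d) for d a downset of L. -/

import Mathlib

/-- A finite rooted poset: a finite partial order with a greatest element (the root). -/
structure FRP : Type 1 where
  carrier : Type
  [po : PartialOrder carrier]
  [fin : Finite carrier]
  root : carrier
  le_root : ∀ x : carrier, x ≤ root

attribute [instance] FRP.po FRP.fin

/-- The downset of a point, as a finite rooted poset. -/
def FRP.down (P : FRP) (p : P.carrier) : FRP where
  carrier := {x : P.carrier // x ≤ p}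
  root := ⟨p, le_refl p⟩
  le_root := fun x => x.2

/-- An `L`-evaluation: a monotone map from a finite rooted poset into `L`. -/
structure Eval (L : Type) [PartialOrder L] : Type 1 where
  P : FRP
  map : P.carrier → L
  mono : Monotone map

variable {L : Type} [PartialOrder L]

/-- Restriction of an evaluation to the downset of a point. -/
def Eval.restrict (u : Eval L) (p : u.P.carrier) : Eval L where
  P := u.P.down p
  map := fun x => u.map x.1
  mono := fun _ _ h => u.mono h

/-- The value of an evaluation at the root of its domain. -/
def Eval.rootVal (u : Eval L) : L := u.map u.P.root

/-- The relations `∼ₙ` on `L`-evaluations. -/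
def sim (L : Type) [PartialOrder L] : ℕ → Eval L → Eval L → Prop
  | 0 => fun u v => u.rootVal = v.rootVal
  | n+1 => fun u v =>
      (∀ p, ∃ q, sim L n (u.restrict p) (v.restrict q)) ∧
      (∀ q, ∃ p, sim L n (v.restrict q) (u.restrict p))

/-- The relations `≤ₙ`: `lev L n v u` means `v ≤ₙ u`. -/
def lev (L : Type) [PartialOrder L] : ℕ → Eval L → Eval L → Prop
  | 0 => fun v u => v.rootVal ≤ u.rootVal
  | n+1 => fun v u => ∀ q, ∃ p, sim L n (v.restrict q) (u.restrict p)

/-- `S` is a subpresheaf of `h_L`: closed under restriction. -/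
def IsSub (L : Type) [PartialOrder L] (S : Set (Eval L)) : Prop :=
  ∀ u ∈ S, ∀ p, u.restrict p ∈ S

/-- `S` has b-index `n`: closed under `∼ₙ`. -/
def BIndex (L : Type) [PartialOrder L] (n : ℕ) (S : Set (Eval L)) : Prop :=
  ∀ u ∈ S, ∀ v, sim L n u v → v ∈ S

/-- `S` has b≤-index `n`: closed under being `≤ₙ`-below a member. -/
def BleIndex (L : Type) [PartialOrder L] (n : ℕ) (S : Set (Eval L)) : Prop :=
  ∀ u ∈ S, ∀ v, lev L n v u → v ∈ S

/-- `↓ₙ u`. -/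
def downSet (L : Type) [PartialOrder L] (n : ℕ) (u : Eval L) : Set (Eval L) :=
  {v | lev L n v u}

/-- Pointwise description of Heyting implication of subpresheaves. -/
def himpPt (L : Type) [PartialOrder L] (S T : Set (Eval L)) : Set (Eval L) :=
  {u | ∀ p, u.restrict p ∈ S → u.restrict p ∈ T}

/-- The embedding of downward closed subsets of `L` into subpresheaves. -/
def iota (L : Type) [PartialOrder L] (d : Set L) : Set (Eval L) :=
  {u | u.rootVal ∈ d}

/-- Membership in the Heyting algebra `S(h_L)`: subpresheaves with a b-index. -/
def InS (L : Type) [PartialOrder L] (S : Set (Eval L)) : Prop :=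
  IsSub L S ∧ ∃ n, BIndex L n S

/-- `ev_f`. -/
def evalMap (L : Type) [PartialOrder L] (f : Eval L) (X : Set (Eval L)) : Set f.P.carrier :=
  {p | f.restrict p ∈ X}

/-- Heyting implication of downward closed subsets of a poset. -/
def himpD {M : Type} [PartialOrder M] (a b : Set M) : Set M :=
  {p | ∀ q ≤ p, q ∈ a → q ∈ b}

/-- The smallest sub-Heyting algebra of `Sub(h_L)` containing the image of `ι_L`. -/
inductive Gen (L : Type) [PartialOrder L] : Set (Eval L) → Prop
  | basic (d : Set L) (hd : IsLowerSet d) : Gen L (iota L d)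
  | inter (S T : Set (Eval L)) : Gen L S → Gen L T → Gen L (S ∩ T)
  | union (S T : Set (Eval L)) : Gen L S → Gen L T → Gen L (S ∪ T)
  | himp (S T : Set (Eval L)) : Gen L S → Gen L T → Gen L (himpPt L S T)

section Aux
variable {L : Type} [PartialOrder L]

/-- Iterated invariant type. -/
@[reducible] def Iter (L : Type) : ℕ → Type
  | 0 => L
  | n+1 => Set (Iter L n)

instance iterFinite (M : Type) [Finite M] : ∀ n, Finite (Iter M n)
  | 0 => ‹Finite M›
  | n+1 => by
      haveI := iterFinite M n
      exact (inferInstance : Finite (Set (Iter M n)))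

/-- The `n`-th invariant of an evaluation. -/
def inv : (n : ℕ) → Eval L → Iter L n
  | 0, u => u.rootVal
  | n+1, u => {i : Iter L n | ∃ p, inv n (u.restrict p) = i}

/-- The order on invariants. -/
def ordI : (n : ℕ) → Iter L n → Iter L n → Prop
  | 0 => fun a b => a ≤ b
  | _+1 => fun a b => a ⊆ b

theorem ordI_refl : ∀ n (a : Iter L n), ordI n a a
  | 0, a => le_refl a
  | _+1, _ => subset_rfl

theorem ordI_trans : ∀ n (a b c : Iter L n), ordI n a b → ordI n b c → ordI n a c
  | 0, _, _, _, h1, h2 => le_trans h1 h2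
  | _+1, _, _, _, h1, h2 => subset_trans h1 h2

theorem ordI_antisymm : ∀ n (a b : Iter L n), ordI n a b → ordI n b a → a = b
  | 0, _, _, h1, h2 => le_antisymm h1 h2
  | _+1, _, _, h1, h2 => subset_antisymm h1 h2

theorem mem_inv_succ {n : ℕ} {u : Eval L} {i : Iter L n} :
    i ∈ (inv (n+1) u : Set (Iter L n)) ↔ ∃ p, inv n (u.restrict p) = i := Iff.rfl

theorem sim_iff_inv : ∀ n (u v : Eval L), sim L n u v ↔ inv n u = inv n v
  | 0, u, v => Iff.rfl
  | n+1, u, v => by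
    constructor
    · rintro ⟨h1, h2⟩
      apply Set.Subset.antisymm
      · rintro i ⟨p, rfl⟩
        obtain ⟨q, hq⟩ := h1 p
        exact ⟨q, ((sim_iff_inv n _ _).mp hq).symm⟩
      · rintro i ⟨q, rfl⟩
        obtain ⟨p, hp⟩ := h2 q
        exact ⟨p, ((sim_iff_inv n _ _).mp hp).symm⟩
    · intro h
      constructor
      · intro p
        have hm : inv n (u.restrict p) ∈ (inv (n+1) v : Set (Iter L n)) := by
          rw [← h]; exact ⟨p, rfl⟩
        obtain ⟨q, hq⟩ := hm
        exact ⟨q, (sim_iff_inv n _ _).mpr hq.symm⟩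
      · intro q
        have hm : inv n (v.restrict q) ∈ (inv (n+1) u : Set (Iter L n)) := by
          rw [h]; exact ⟨q, rfl⟩
        obtain ⟨p, hp⟩ := hm
        exact ⟨p, (sim_iff_inv n _ _).mpr hp.symm⟩

theorem lev_iff_inv : ∀ n (v u : Eval L), lev L n v u ↔ ordI n (inv n v) (inv n u)
  | 0, v, u => Iff.rfl
  | n+1, v, u => by
    constructor
    · intro h i hi
      obtain ⟨q, rfl⟩ := hi
      obtain ⟨p, hp⟩ := h q
      exact ⟨p, ((sim_iff_inv n _ _).mp hp).symm⟩
    · intro h q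
      obtain ⟨p, hp⟩ := h (⟨q, rfl⟩ : inv n (v.restrict q) ∈ (inv (n+1) v : Set (Iter L n)))
      exact ⟨p, (sim_iff_inv n _ _).mpr hp.symm⟩

theorem rootVal_restrict (u : Eval L) (p : u.P.carrier) :
    (u.restrict p).rootVal = u.map p := rfl

theorem rootVal_eq_of_inv : ∀ n (u v : Eval L), inv n u = inv n v → u.rootVal = v.rootVal
  | 0, _, _, h => h
  | n+1, u, v, h => by
    have hm1 : inv n (u.restrict u.P.root) ∈ (inv (n+1) v : Set (Iter L n)) := by
      rw [← h]; exact ⟨u.P.root, rfl⟩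
    obtain ⟨q, hq⟩ := hm1
    have hm2 : inv n (v.restrict v.P.root) ∈ (inv (n+1) u : Set (Iter L n)) := by
      rw [h]; exact ⟨v.P.root, rfl⟩
    obtain ⟨p, hp⟩ := hm2
    have h1 : u.rootVal = v.map q := rootVal_eq_of_inv n _ _ hq.symm
    have h2 : v.rootVal = u.map p := rootVal_eq_of_inv n _ _ hp.symm
    exact le_antisymm (h1 ▸ v.mono (v.P.le_root q)) (h2 ▸ u.mono (u.P.le_root p))

theorem rootVal_le_of_ordI : ∀ n (v u : Eval L), ordI n (inv n v) (inv n u) →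
    v.rootVal ≤ u.rootVal
  | 0, _, _, h => h
  | n+1, v, u, h => by
    obtain ⟨p, hp⟩ := h (⟨v.P.root, rfl⟩ :
      inv n (v.restrict v.P.root) ∈ (inv (n+1) v : Set (Iter L n)))
    have h1 : v.rootVal = u.map p := rootVal_eq_of_inv n _ _ hp.symm
    exact h1 ▸ u.mono (u.P.le_root p)

/-- Monotonicity: the `n+1`-order refines the `n`-order. -/
theorem ordI_mono : ∀ n (v u : Eval L),
    ordI (n+1) (inv (n+1) v) (inv (n+1) u) → ordI n (inv n v) (inv n u)
  | 0, v, u, h => rootVal_le_of_ordI 1 v u h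
  | n+1, v, u, h => by
    intro i hi
    obtain ⟨q, rfl⟩ := hi
    obtain ⟨p, hp⟩ := h (⟨q, rfl⟩ :
      inv (n+1) (v.restrict q) ∈ (inv (n+2) v : Set (Iter L (n+1))))
    refine ⟨p, ?_⟩
    have h1 : ordI n (inv n (u.restrict p)) (inv n (v.restrict q)) :=
      ordI_mono n _ _ (le_of_eq hp)
    have h2 : ordI n (inv n (v.restrict q)) (inv n (u.restrict p)) :=
      ordI_mono n _ _ (le_of_eq hp.symm)
    exact ordI_antisymm n _ _ h1 h2

theorem inv_mono {n : ℕ} {u v : Eval L} (h : inv (n+1) u = inv (n+1) v) :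
    inv n u = inv n v :=
  ordI_antisymm n _ _ (ordI_mono n _ _ (le_of_eq h)) (ordI_mono n _ _ (le_of_eq h.symm))

end Aux
section Aux2
variable {L : Type} [PartialOrder L]

theorem orderIso_root {P Q : FRP} (e : P.carrier ≃o Q.carrier) : e P.root = Q.root := by
  apply le_antisymm (Q.le_root _)
  have : Q.root = e (e.symm Q.root) := (e.apply_symm_apply _).symm
  rw [this]
  exact e.monotone (P.le_root _)

/-- Restriction of an order isomorphism to a principal downset. -/
def restrictOrderIso {P Q : FRP} (e : P.carrier ≃o Q.carrier) (p : P.carrier) :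
    (P.down p).carrier ≃o (Q.down (e p)).carrier where
  toFun x := ⟨e x.1, e.monotone x.2⟩
  invFun y := ⟨e.symm y.1, by
    have := e.symm.monotone y.2
    simpa using this⟩
  left_inv x := Subtype.ext (by simp)
  right_inv y := Subtype.ext (by simp)
  map_rel_iff' := by
    intro x y
    exact e.map_rel_iff

theorem inv_eq_of_iso : ∀ n (u v : Eval L) (e : u.P.carrier ≃o v.P.carrier),
    (∀ x, v.map (e x) = u.map x) → inv n u = inv n v
  | 0, u, v, e, he => by
    show u.rootVal = v.rootVal
    have := he u.P.root
    rw [orderIso_root e] at this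
    exact this.symm
  | n+1, u, v, e, he => by
    apply Set.Subset.antisymm
    · rintro i ⟨p, rfl⟩
      refine ⟨e p, ?_⟩
      exact (inv_eq_of_iso n (u.restrict p) (v.restrict (e p)) (restrictOrderIso e p)
        (fun x => he x.1)).symm
    · rintro i ⟨q, rfl⟩
      refine ⟨e.symm q, ?_⟩
      have := inv_eq_of_iso n (u.restrict (e.symm q)) (v.restrict (e (e.symm q)))
        (restrictOrderIso e (e.symm q)) (fun x => he x.1)
      rw [e.apply_symm_apply] at this
      exact this

/-- Restricting at the root does not change the invariant. -/
theorem inv_restrict_root (n : ℕ) (u : Eval L) :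
    inv n (u.restrict u.P.root) = inv n u := by
  refine inv_eq_of_iso n _ _ ?_ ?_
  · exact {
      toFun := fun x => x.1
      invFun := fun x => ⟨x, u.P.le_root x⟩
      left_inv := fun x => rfl
      right_inv := fun x => rfl
      map_rel_iff' := Iff.rfl }
  · intro x; rfl

end Aux2
section Aux3
variable {L : Type} [PartialOrder L]

/-- Carrier of the glued poset. -/
inductive GC (P Q : FRP) : Type where
  | inl (a : P.carrier) : GC P Q
  | inr (b : Q.carrier) : GC P Q

def GC.toSum {P Q : FRP} : GC P Q ≃ (P.carrier ⊕ Q.carrier) where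
  toFun x := match x with
    | GC.inl a => Sum.inl a
    | GC.inr b => Sum.inr b
  invFun x := match x with
    | Sum.inl a => GC.inl a
    | Sum.inr b => GC.inr b
  left_inv x := by cases x <;> rfl
  right_inv x := by cases x <;> rfl

instance {P Q : FRP} : Finite (GC P Q) := Finite.of_equiv _ GC.toSum.symm

/-- The order on the glued poset. -/
def gle (P Q : FRP) : GC P Q → GC P Q → Prop
  | GC.inl a, GC.inl b => a ≤ b
  | GC.inr a, GC.inr b => a ≤ b
  | GC.inr _, GC.inl b => P.root ≤ b
  | GC.inl _, GC.inr _ => False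

/-- Gluing `Q` below the root of `P`. -/
def glueFRP (P Q : FRP) : FRP where
  carrier := GC P Q
  po :=
    { le := gle P Q
      lt := fun a b => gle P Q a b ∧ ¬ gle P Q b a
      lt_iff_le_not_ge := fun _ _ => Iff.rfl
      le_refl := fun a => by cases a <;> exact le_refl _
      le_trans := fun a b c hab hbc => by
        cases a <;> cases b <;> cases c
        · exact le_trans hab hbc
        · exact False.elim hbc
        · exact False.elim hab
        · exact False.elim hab
        · exact le_trans hab hbc
        · exact False.elim hbc
        · exact hbc
        · exact le_trans hab hbc
      le_antisymm := fun a b hab hba => by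
        cases a <;> cases b
        · exact congrArg GC.inl (le_antisymm hab hba)
        · exact False.elim hab
        · exact False.elim hba
        · exact congrArg GC.inr (le_antisymm hab hba) }
  root := GC.inl P.root
  le_root := fun x => by
    cases x
    · exact P.le_root _
    · exact le_refl P.root

/-- Gluing an evaluation `v` below the root of `u`. -/
def glueEval (u v : Eval L) (h : v.rootVal ≤ u.rootVal) : Eval L where
  P := glueFRP u.P v.P
  map := fun x => match x with
    | GC.inl a => u.map a
    | GC.inr b => v.map b
  mono := fun x y hxy => by
    cases x <;> cases y
    · exact u.mono hxy
    · exact (hxy : False).elim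
    · calc v.map _ ≤ v.rootVal := v.mono (v.P.le_root _)
        _ ≤ u.rootVal := h
        _ ≤ u.map _ := u.mono (hxy : u.P.root ≤ _)
    · exact v.mono hxy

variable {u v : Eval L} {h : v.rootVal ≤ u.rootVal}

theorem inv_glue_inr (n : ℕ) (q : v.P.carrier) :
    inv n ((glueEval u v h).restrict (GC.inr q)) = inv n (v.restrict q) := by
  refine inv_eq_of_iso n _ _ ?_ ?_
  · exact {
      toFun := fun x => match x with
        | ⟨GC.inl _, hx⟩ => (False.elim (hx : False))
        | ⟨GC.inr b, hx⟩ => ⟨b, hx⟩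
      invFun := fun y => ⟨GC.inr y.1, y.2⟩
      left_inv := fun x => by
        match x with
        | ⟨GC.inl _, hx⟩ => exact (False.elim (hx : False))
        | ⟨GC.inr b, hx⟩ => rfl
      right_inv := fun y => rfl
      map_rel_iff' := by
        rintro ⟨(a | a), ha⟩ ⟨(b | b), hb⟩
        · exact (False.elim (ha : False))
        · exact (False.elim (ha : False))
        · exact (False.elim (hb : False))
        · exact Iff.rfl }
  · rintro ⟨(a | a), ha⟩
    · exact (False.elim (ha : False))
    · rfl

theorem inv_glue_inl (n : ℕ) (p : u.P.carrier) (hp : ¬ u.P.root ≤ p) :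
    inv n ((glueEval u v h).restrict (GC.inl p)) = inv n (u.restrict p) := by
  refine inv_eq_of_iso n _ _ ?_ ?_
  · exact {
      toFun := fun x => match x with
        | ⟨GC.inl b, hx⟩ => ⟨b, hx⟩
        | ⟨GC.inr _, hx⟩ => (False.elim (hp (hx : u.P.root ≤ p)))
      invFun := fun y => ⟨GC.inl y.1, y.2⟩
      left_inv := fun x => by
        match x with
        | ⟨GC.inl b, hx⟩ => rfl
        | ⟨GC.inr _, hx⟩ => exact (False.elim (hp (hx : u.P.root ≤ p)))
      right_inv := fun y => rfl
      map_rel_iff' := by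
        rintro ⟨(a | a), ha⟩ ⟨(b | b), hb⟩
        · exact Iff.rfl
        · exact (False.elim (hp (hb : u.P.root ≤ p)))
        · exact (False.elim (hp (ha : u.P.root ≤ p)))
        · exact (False.elim (hp (ha : u.P.root ≤ p))) }
  · rintro ⟨(a | a), ha⟩
    · rfl
    · exact (False.elim (hp (ha : u.P.root ≤ p)))

theorem inv_glue : ∀ n, ordI n (inv n v) (inv n u) →
    inv n (glueEval u v h) = inv n u
  | 0, _ => rfl
  | n+1, hle => by
    have ihn : inv n (glueEval u v h) = inv n u := inv_glue n (ordI_mono n v u hle)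
    apply Set.Subset.antisymm
    · rintro i ⟨x, rfl⟩
      match x with
      | GC.inl p =>
        by_cases hp : u.P.root ≤ p
        · have hpe : p = u.P.root := le_antisymm (u.P.le_root p) hp
          subst hpe
          refine ⟨u.P.root, ?_⟩
          have h1 : inv n ((glueEval u v h).restrict (GC.inl u.P.root)) =
              inv n (glueEval u v h) := inv_restrict_root n (glueEval u v h)
          rw [h1, ihn, ← inv_restrict_root n u]
        · exact ⟨p, (inv_glue_inl n p hp).symm⟩
      | GC.inr q =>
        have hm := hle (⟨q, rfl⟩ : inv n (v.restrict q) ∈ (inv (n+1) v : Set (Iter L n)))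
        rw [inv_glue_inr n q]
        exact hm
    · rintro i ⟨p, rfl⟩
      by_cases hp : u.P.root ≤ p
      · have hpe : p = u.P.root := le_antisymm (u.P.le_root p) hp
        subst hpe
        refine ⟨GC.inl u.P.root, ?_⟩
        have h1 : inv n ((glueEval u v h).restrict (GC.inl u.P.root)) =
            inv n (glueEval u v h) := inv_restrict_root n (glueEval u v h)
        rw [h1, ihn, ← inv_restrict_root n u]
      · exact ⟨GC.inl p, inv_glue_inl n p hp⟩

theorem bindex_bleindex (n : ℕ) (S : Set (Eval L)) (hS : IsSub L S) (hb : BIndex L n S) :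
    BleIndex L n S := by
  intro u hu v hlev
  have hord := (lev_iff_inv n v u).mp hlev
  have hroot : v.rootVal ≤ u.rootVal := rootVal_le_of_ordI n v u hord
  have hw : inv n (glueEval u v hroot) = inv n u := inv_glue n hord
  have hwS : glueEval u v hroot ∈ S := hb u hu _ ((sim_iff_inv n u _).mpr hw.symm)
  have hres : (glueEval u v hroot).restrict (GC.inr v.P.root) ∈ S := hS _ hwS _
  have hv : inv n ((glueEval u v hroot).restrict (GC.inr v.P.root)) = inv n v := by
    rw [inv_glue_inr, inv_restrict_root]
  exact hb _ hres v ((sim_iff_inv n _ v).mpr hv)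

end Aux3
section Aux4
variable {L : Type} [PartialOrder L]

theorem gen_empty : Gen L ∅ := by
  have h : (∅ : Set (Eval L)) = iota L ∅ := by
    ext u; simp [iota]
  rw [h]
  exact Gen.basic ∅ (by intro a b _ h; exact h)

theorem gen_univ : Gen L Set.univ := by
  have h : (Set.univ : Set (Eval L)) = iota L Set.univ := by
    ext u; simp [iota]
  rw [h]
  exact Gen.basic Set.univ (by intro a b _ _; trivial)

theorem gen_biUnion {ι : Type} {t : Set ι} (ht : t.Finite) {f : ι → Set (Eval L)} :
    (∀ i ∈ t, Gen L (f i)) → Gen L (⋃ i ∈ t, f i) := by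
  refine Set.Finite.induction_on
    (motive := fun t _ => (∀ i ∈ t, Gen L (f i)) → Gen L (⋃ i ∈ t, f i)) t ht ?_ ?_
  · intro _
    simpa using gen_empty
  · intro a s _ _ ih hf
    rw [Set.biUnion_insert]
    exact Gen.union _ _ (hf a (Set.mem_insert _ _))
      (ih fun i hi => hf i (Set.mem_insert_of_mem _ hi))

theorem gen_biInter {ι : Type} {t : Set ι} (ht : t.Finite) {f : ι → Set (Eval L)} :
    (∀ i ∈ t, Gen L (f i)) → Gen L (⋂ i ∈ t, f i) := by
  refine Set.Finite.induction_on
    (motive := fun t _ => (∀ i ∈ t, Gen L (f i)) → Gen L (⋂ i ∈ t, f i)) t ht ?_ ?_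
  · intro _
    simpa using gen_univ
  · intro a s _ _ ih hf
    rw [Set.biInter_insert]
    exact Gen.inter _ _ (hf a (Set.mem_insert _ _))
      (ih fun i hi => hf i (Set.mem_insert_of_mem _ hi))

/-- The downset of an invariant, as a set of evaluations. -/
def DI (n : ℕ) (i : Iter L n) : Set (Eval L) := {a | ordI n (inv n a) i}

theorem genDI [Finite L] : ∀ n (i : Iter L n), Gen L (DI n i)
  | 0, l => by
    have h : DI 0 l = iota L (Set.Iic l) := rfl
    rw [h]
    exact Gen.basic _ (fun a b hab ha => le_trans hab ha)
  | n+1, T => by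
    classical
    -- auxiliary sets
    set E : Iter L n → Set (Eval L) :=
      fun i => ⋃ j ∈ {j | ordI n j i ∧ j ≠ i}, DI n j with hE
    set A : Set (Iter L n) → Set (Eval L) := fun T₁ => ⋂ i ∈ T \ T₁, E i with hA
    set B : Set (Iter L n) → Set (Eval L) := fun T₁ => ⋃ i ∈ T₁, DI n i with hB
    have key : DI (n+1) T = ⋂ T₁ ∈ {T₁ : Set (Iter L n) | T₁ ⊆ T}, himpPt L (A T₁) (B T₁) := by
      ext a
      simp only [Set.mem_iInter, Set.mem_setOf_eq]
      constructor
      · intro ha T₁ hT₁ p hp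
        have hiT : inv n (a.restrict p) ∈ T := ha ⟨p, rfl⟩
        by_cases h1 : inv n (a.restrict p) ∈ T₁
        · exact Set.mem_biUnion h1 (ordI_refl n _)
        · exfalso
          have hpE : a.restrict p ∈ E (inv n (a.restrict p)) := by
            rw [hA] at hp
            simp only [Set.mem_iInter] at hp
            exact hp _ ⟨hiT, h1⟩
          rw [hE] at hpE
          simp only [Set.mem_iUnion, Set.mem_setOf_eq] at hpE
          obtain ⟨j, ⟨hj1, hj2⟩, hj3⟩ := hpE
          exact hj2 (ordI_antisymm n _ _ hj1 hj3)
      · intro hmem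
        rintro i ⟨p, rfl⟩
        by_contra hiT
        set i₀ := inv n (a.restrict p) with hi₀
        have hsub : {i ∈ T | ¬ ordI n i₀ i} ⊆ T := Set.sep_subset _ _
        have hrp : a.restrict p ∈ A {i ∈ T | ¬ ordI n i₀ i} := by
          rw [hA]
          simp only [Set.mem_iInter]
          rintro i ⟨hi1, hi2⟩
          have hord : ordI n i₀ i := by
            by_contra hc
            exact hi2 ⟨hi1, hc⟩
          rw [hE]
          refine Set.mem_biUnion ?_ (ordI_refl n i₀)
          exact ⟨hord, fun he => hiT (he ▸ hi1)⟩
        have := hmem _ hsub p hrp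
        rw [hB] at this
        simp only [Set.mem_iUnion, Set.mem_setOf_eq] at this
        obtain ⟨i, ⟨_, hi2⟩, hi3⟩ := this
        exact hi2 hi3
    rw [key]
    refine gen_biInter (Set.toFinite _) ?_
    intro T₁ _
    refine Gen.himp _ _ ?_ ?_
    · exact gen_biInter (Set.toFinite _) fun i _ =>
        gen_biUnion (Set.toFinite _) fun j _ => genDI n j
    · exact gen_biUnion (Set.toFinite _) fun i _ => genDI n i

end Aux4
/-- the image of `ι_L` generates `S(h_L)` as a Heyting algebra. -/
theorem iota_generates (L : Type) [PartialOrder L] [Finite L]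
    (S : Set (Eval L)) (hS : IsSub L S) (hb : ∃ n, BIndex L n S) : Gen L S := by
  obtain ⟨n, hb⟩ := hb
  have hble := bindex_bleindex n S hS hb
  have key : S = ⋃ i ∈ inv n '' S, DI n i := by
    ext a
    simp only [Set.mem_iUnion, Set.mem_image]
    constructor
    · intro ha
      exact ⟨inv n a, ⟨a, ha, rfl⟩, ordI_refl n _⟩
    · rintro ⟨i, ⟨u, hu, rfl⟩, hord⟩
      exact hble u hu a ((lev_iff_inv n a u).mpr hord)
  rw [key]
  exact gen_biUnion (Set.toFinite _) fun i _ => genDI n i
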